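/- For all real t ∈ (0,1] and integers k ≥ 2, the function h ↦ k·(1 − t/k)^h − (k−1)·(1 − t/(k−1))^h is monotonically decreasing in the integer h ≥ 0; that is, for every h ≥ 0, k·(1 − t/k)^h − (k−1)·(1 − t/(k−1))^h ≥ k·(1 − t/k)^{h+1} − (k−1)·(1 − t/(k−1))^{h+1}. -/

import Mathlib

/-- Monotone decrease in `h` of `k (1 - t/k)^h - (k-1) (1 - t/(k-1))^h`. -/
theorem E1_decreasing (t : ℝ) (ht0 : 0 < t) (ht1 : t ≤ 1)
    (k : ℕ) (hk : 2 ≤ k) (h : ℕ) :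
    (k : ℝ) * (1 - t / (k : ℝ)) ^ h - ((k : ℝ) - 1) * (1 - t / ((k : ℝ) - 1)) ^ h
      ≥ (k : ℝ) * (1 - t / (k : ℝ)) ^ (h + 1)
        - ((k : ℝ) - 1) * (1 - t / ((k : ℝ) - 1)) ^ (h + 1) := by
  have hk2 : (2 : ℝ) ≤ (k : ℝ) := by exact_mod_cast hk
  have hk0 : (0 : ℝ) < (k : ℝ) := by linarith
  have hk1 : (0 : ℝ) < (k : ℝ) - 1 := by linarith
  set a := 1 - t / (k : ℝ) with ha
  set b := 1 - t / ((k : ℝ) - 1) with hb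
  have hb0 : 0 ≤ b := by
    rw [hb, sub_nonneg, div_le_one hk1]; linarith
  have hab : b ≤ a := by
    rw [ha, hb]
    have : t / (k : ℝ) ≤ t / ((k : ℝ) - 1) :=
      div_le_div_of_nonneg_left ht0.le hk1 (by linarith)
    linarith
  have hpow : b ^ h ≤ a ^ h := pow_le_pow_left₀ hb0 hab h
  have e1 : (k : ℝ) * a ^ h - (k : ℝ) * a ^ (h + 1) = t * a ^ h := by
    rw [pow_succ, ha]; field_simp; ring
  have e2 : ((k : ℝ) - 1) * b ^ h - ((k : ℝ) - 1) * b ^ (h + 1) = t * b ^ h := by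
    rw [pow_succ, hb]; field_simp; ring
  nlinarith [mul_le_mul_of_nonneg_left hpow ht0.le]
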